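/- Let m ≥ 1 and c_1,…,c_m ∈ ℂ. Suppose w, w' : ℤ^m → ℂ both vanish at every f ∈ ℤ^m that is not dominant (i.e. whenever f_1 ≥ f_2 ≥ … ≥ f_m ≥ 0 fails), both satisfy, for every dominant f ∈ ℤ^m and every 1 ≤ i ≤ m, the difference equation c_i·w(f) = Σ_{ε ∈ I_i} w(f+ε), and satisfy w(0,…,0) = w'(0,…,0). Then w = w'. -/

import Mathlib

/-- `f ∈ ℤ^m` is dominant: `f 0 ≥ f 1 ≥ … ≥ f (m-1) ≥ 0`. -/
def Dominant (m : ℕ) (f : Fin m → ℤ) : Prop :=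
  Antitone f ∧ ∀ j, 0 ≤ f j

/-- `I_i`: the set of `ε ∈ {0,1}^m ⊆ ℤ^m` with `Σ_j ε_j = i`. -/
def ISet (m i : ℕ) : Set (Fin m → ℤ) :=
  {ε | (∀ j, ε j = 0 ∨ ε j = 1) ∧ ∑ j, ε j = (i : ℤ)}

private lemma card_filter_lt {m k : ℕ} (hk : k ≤ m) :
    ((Finset.univ : Finset (Fin m)).filter fun j : Fin m => (j:ℕ) < k).card = k := by
  have h : Finset.image Fin.val ((Finset.univ : Finset (Fin m)).filter fun j : Fin m => (j:ℕ) < k)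
      = Finset.range k := by
    ext a
    simp only [Finset.mem_image, Finset.mem_filter, Finset.mem_univ, true_and, Finset.mem_range]
    constructor
    · rintro ⟨j, hj, rfl⟩; exact hj
    · intro ha; exact ⟨⟨a, lt_of_lt_of_le ha hk⟩, ha, rfl⟩
  calc ((Finset.univ : Finset (Fin m)).filter fun j : Fin m => (j:ℕ) < k).card
      = (Finset.image Fin.val ((Finset.univ : Finset (Fin m)).filter fun j : Fin m => (j:ℕ) < k)).card :=
        (Finset.card_image_of_injective _ Fin.val_injective).symm
    _ = k := by rw [h, Finset.card_range]

private lemma lowerset_mem_iff {m : ℕ} {s : Finset (Fin m)}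
    (hs : ∀ ⦃a b : Fin m⦄, a ≤ b → b ∈ s → a ∈ s) {j : Fin m} :
    j ∈ s ↔ (j:ℕ) < s.card := by
  constructor
  · intro hj
    have h1 : Finset.Iic j ⊆ s := fun a ha => hs (Finset.mem_Iic.mp ha) hj
    have := Finset.card_le_card h1
    rw [Fin.card_Iic] at this; omega
  · intro hj
    by_contra hns
    have h2 : s ⊆ Finset.Iio j := by
      intro a ha
      rw [Finset.mem_Iio]
      by_contra hna
      exact hns (hs (le_of_not_gt hna) ha)
    have := Finset.card_le_card h2
    rw [Fin.card_Iio] at this; omega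

private def ind {m : ℕ} (s : Finset (Fin m)) : Fin m → ℤ := fun j => if j ∈ s then 1 else 0

private lemma sum_ind {m : ℕ} (s : Finset (Fin m)) : ∑ j, ind s j = (s.card : ℤ) := by
  simp [ind, Finset.sum_ite_mem]


private def mu (m : ℕ) (f : Fin m → ℤ) : ℤ := ∑ j : Fin m, ((m:ℤ) - (j:ℕ)) * f j

private lemma mu_add (m : ℕ) (f g : Fin m → ℤ) : mu m (f + g) = mu m f + mu m g := by
  simp [mu, mul_add, Finset.sum_add_distrib]

private lemma mu_ind (m : ℕ) (s : Finset (Fin m)) :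
    mu m (ind s) = ∑ j ∈ s, ((m:ℤ) - (j:ℕ) : ℤ) := by
  simp only [mu, ind, mul_ite, mul_one, mul_zero]
  rw [Finset.sum_ite_mem, Finset.univ_inter]

private lemma nat_weight {m : ℕ} (s : Finset (Fin m)) :
    ∑ j ∈ s, ((m:ℤ) - (j:ℕ) : ℤ) = ((∑ j ∈ s, (m - (j:ℕ)) : ℕ) : ℤ) := by
  rw [Nat.cast_sum]
  apply Finset.sum_congr rfl
  intro j _
  have : (j:ℕ) < m := j.isLt
  omega

private lemma key_count {m : ℕ} (u : Finset (Fin m)) :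
    ∑ j ∈ u, (m - (j:ℕ)) = ∑ t : Fin m, ((u.filter (fun j => j ≤ t)).card) := by
  have h1 : ∀ j : Fin m, m - (j:ℕ) = ∑ t : Fin m, if j ≤ t then 1 else 0 := by
    intro j
    have h2 : (Finset.univ.filter fun t : Fin m => j ≤ t) = Finset.Ici j := by
      ext t; simp
    rw [← Finset.card_filter, h2, Fin.card_Ici]
  rw [Finset.sum_congr rfl (fun j _ => h1 j), Finset.sum_comm]
  apply Finset.sum_congr rfl
  intro t _
  rw [Finset.card_filter]

private lemma weight_lt {m k : ℕ} (hk : k ≤ m) (s : Finset (Fin m)) (hcard : s.card = k)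
    (hne : s ≠ Finset.univ.filter (fun j : Fin m => (j:ℕ) < k)) :
    ∑ j ∈ s, ((m:ℤ) - (j:ℕ) : ℤ)
      < ∑ j ∈ (Finset.univ.filter fun j : Fin m => (j:ℕ) < k), ((m:ℤ) - (j:ℕ)) := by
  set s0 : Finset (Fin m) := Finset.univ.filter (fun j => (j:ℕ) < k) with hs0
  rw [nat_weight, nat_weight]
  have hs0card : s0.card = k := card_filter_lt hk
  -- pick j ∈ s0 \ s
  obtain ⟨j, hjs0, hjs⟩ : ∃ j, j ∈ s0 ∧ j ∉ s := by
    by_contra hcon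
    push_neg at hcon
    exact hne (Finset.eq_of_subset_of_card_le hcon (by omega)).symm
  have hfil : ∀ t : Fin m, (s0.filter (fun j => j ≤ t)).card = min k ((t:ℕ)+1) := by
    intro t
    have : s0.filter (fun j => j ≤ t) =
        Finset.univ.filter (fun j : Fin m => (j:ℕ) < min k ((t:ℕ)+1)) := by
      ext a
      simp only [hs0, Finset.mem_filter, Finset.mem_univ, true_and, Fin.le_def]
      omega
    rw [this, card_filter_lt (by omega)]
  rw [Int.ofNat_lt, key_count, key_count]
  apply Finset.sum_lt_sum
  · intro t _
    rw [hfil t]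
    apply le_min
    · calc (s.filter (fun j => j ≤ t)).card ≤ s.card := Finset.card_le_card (Finset.filter_subset _ _)
        _ = k := hcard
    · calc (s.filter (fun j => j ≤ t)).card ≤ (Finset.Iic t).card := by
            apply Finset.card_le_card
            intro a ha
            simp only [Finset.mem_filter] at ha
            exact Finset.mem_Iic.mpr ha.2
        _ = (t:ℕ) + 1 := Fin.card_Iic t
  · refine ⟨j, Finset.mem_univ j, ?_⟩
    rw [hfil j]
    have hjk : (j:ℕ) < k := by
      simpa [hs0] using hjs0
    have hle : (s.filter (fun a => a ≤ j)).card ≤ (j:ℕ) := by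
      calc (s.filter (fun a => a ≤ j)).card ≤ (Finset.Iio j).card := by
            apply Finset.card_le_card
            intro a ha
            simp only [Finset.mem_filter] at ha
            rw [Finset.mem_Iio]
            rcases lt_or_eq_of_le ha.2 with h | h
            · exact h
            · exact absurd (h ▸ ha.1) hjs
        _ = (j:ℕ) := Fin.card_Iio j
    omega

private lemma ind_inj {m : ℕ} : Function.Injective (ind (m := m)) := by
  intro s t h
  ext j
  have hj := congrFun h j
  simp only [ind] at hj
  by_cases h1 : j ∈ s <;> by_cases h2 : j ∈ t <;> simp_all

private lemma ISet_eq (m i : ℕ) :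
    ISet m i = ↑((Finset.univ.powersetCard i).image (fun s : Finset (Fin m) => ind s)) := by
  ext ε
  simp only [ISet, Set.mem_setOf_eq, Finset.coe_image, Set.mem_image, Finset.mem_coe,
    Finset.mem_powersetCard_univ]
  constructor
  · rintro ⟨h01, hsum⟩
    have heq : ε = ind (Finset.univ.filter (fun j => ε j = 1)) := by
      funext j; rcases h01 j with h | h <;> simp [ind, h]
    refine ⟨Finset.univ.filter (fun j => ε j = 1), ?_, heq.symm⟩
    rw [heq, sum_ind] at hsum
    exact_mod_cast hsum
  · rintro ⟨s, hcard, rfl⟩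
    refine ⟨fun j => ?_, by rw [sum_ind, hcard]⟩
    by_cases h : j ∈ s <;> simp [ind, h]

private lemma mu_nonneg {m : ℕ} {f : Fin m → ℤ} (hf : Dominant m f) : 0 ≤ mu m f := by
  apply Finset.sum_nonneg
  intro j _
  have h1 : (j:ℕ) < m := j.isLt
  have h2 : (0:ℤ) ≤ (m:ℤ) - (j:ℕ) := by omega
  exact mul_nonneg h2 (hf.2 j)

/-- uniqueness of the solution of Shintani's system of difference
equations: if `w` and `w'` both vanish off the dominant tuples, both satisfy
`c_i · w(f) = Σ_{ε ∈ I_i} w(f + ε)` for every dominant `f` and every `1 ≤ i ≤ m`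
(here indexed by `i : Fin m`, the paper's index being `i + 1`), and agree at `0`,
then `w = w'`. -/
theorem difference_equation_unique_solution
    (m : ℕ) (hm : 1 ≤ m) (c : Fin m → ℂ) (w w' : (Fin m → ℤ) → ℂ)
    (hw0 : ∀ f, ¬ Dominant m f → w f = 0)
    (hw0' : ∀ f, ¬ Dominant m f → w' f = 0)
    (hrec : ∀ f, Dominant m f → ∀ i : Fin m,
      c i * w f = ∑ᶠ ε ∈ ISet m ((i : ℕ) + 1), w (f + ε))
    (hrec' : ∀ f, Dominant m f → ∀ i : Fin m,
      c i * w' f = ∑ᶠ ε ∈ ISet m ((i : ℕ) + 1), w' (f + ε))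
    (hinit : w 0 = w' 0) :
    w = w' := by
  have key : ∀ n : ℕ, ∀ f : Fin m → ℤ, Dominant m f → mu m f ≤ n → w f = w' f := by
    intro n
    induction n with
    | zero =>
      intro f hf hmu
      have hf0 : f = 0 := by
        funext j
        by_contra hj
        have h1 : 0 < f j := lt_of_le_of_ne (hf.2 j) (Ne.symm hj)
        have h2 : (0:ℤ) < mu m f := by
          have hnn : ∀ a : Fin m, a ∈ Finset.univ → 0 ≤ ((m:ℤ) - (a:ℕ)) * f a := by
            intro a _
            have h3 : (a:ℕ) < m := a.isLt
            have h4 : (0:ℤ) ≤ (m:ℤ) - (a:ℕ) := by omega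
            exact mul_nonneg h4 (hf.2 a)
          apply Finset.sum_pos' hnn
          refine ⟨j, Finset.mem_univ j, ?_⟩
          have h3 : (j:ℕ) < m := j.isLt
          have h4 : (0:ℤ) < (m:ℤ) - (j:ℕ) := by omega
          exact mul_pos h4 h1
        simp only [Nat.cast_zero] at hmu
        linarith
      rw [hf0]; exact hinit
    | succ n ih =>
      intro f hf hmu
      by_cases h0 : f = 0
      · rw [h0]; exact hinit
      set s0 : Finset (Fin m) := Finset.univ.filter (fun j => 0 < f j) with hs0
      have hsdc : ∀ ⦃a b : Fin m⦄, a ≤ b → b ∈ s0 → a ∈ s0 := by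
        intro a b hab hb
        simp only [hs0, Finset.mem_filter, Finset.mem_univ, true_and] at hb ⊢
        exact lt_of_lt_of_le hb (hf.1 hab)
      set k := s0.card with hk
      have hmem : ∀ j : Fin m, 0 < f j ↔ (j:ℕ) < k := by
        intro j
        rw [← lowerset_mem_iff hsdc]
        simp [hs0]
      have hk1 : 1 ≤ k := by
        obtain ⟨j, hj⟩ : ∃ j, f j ≠ 0 := by
          by_contra hcon
          push_neg at hcon
          exact h0 (funext hcon)
        have := (hmem j).mp (lt_of_le_of_ne (hf.2 j) (Ne.symm hj))
        omega
      have hkm : k ≤ m := by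
        calc k ≤ (Finset.univ : Finset (Fin m)).card := Finset.card_le_card (Finset.filter_subset _ _)
          _ = m := Finset.card_fin m
      have hs0eq : s0 = Finset.univ.filter (fun j : Fin m => (j:ℕ) < k) := by
        ext j
        simp only [hs0, Finset.mem_filter, Finset.mem_univ, true_and]
        exact hmem j
      set ε0 : Fin m → ℤ := ind s0 with hε0
      set g : Fin m → ℤ := f - ε0 with hg
      have hε0val : ∀ j, ε0 j = if 0 < f j then 1 else 0 := by
        intro j
        simp only [hε0, ind, hs0, Finset.mem_filter, Finset.mem_univ, true_and]
      have hfg : f = g + ε0 := by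
        funext j; simp [hg]
      have hgdom : Dominant m g := by
        constructor
        · intro a b hab
          have h1 := hf.1 hab
          have h2 := hf.2 a
          have h3 := hf.2 b
          simp only [hg, Pi.sub_apply, hε0val]
          by_cases hb : 0 < f b
          · have ha : 0 < f a := lt_of_lt_of_le hb h1
            simp [ha, hb]; omega
          · have hb0 : f b = 0 := le_antisymm (le_of_not_gt hb) h3
            by_cases ha : 0 < f a <;> simp [ha, hb, hb0] <;> omega
        · intro j
          have h2 := hf.2 j
          simp only [hg, Pi.sub_apply, hε0val]
          by_cases hj : 0 < f j <;> simp [hj] <;> omega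
      have hmusplit : mu m f = mu m g + ∑ j ∈ s0, ((m:ℤ) - (j:ℕ) : ℤ) := by
        rw [hfg, mu_add, mu_ind]
      have hW1 : 1 ≤ ∑ j ∈ s0, ((m:ℤ) - (j:ℕ) : ℤ) := by
        have h0mem : (⟨0, hm⟩ : Fin m) ∈ s0 := by
          rw [hs0eq]
          simp only [Finset.mem_filter, Finset.mem_univ, true_and]
          exact hk1
        calc (1:ℤ) ≤ (m:ℤ) - ((⟨0, hm⟩ : Fin m):ℕ) := by simp; exact_mod_cast hm
          _ ≤ ∑ j ∈ s0, ((m:ℤ) - (j:ℕ) : ℤ) := by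
            apply Finset.single_le_sum (f := fun j : Fin m => (m:ℤ) - (j:ℕ)) _ h0mem
            intro a _
            have h3 : (a:ℕ) < m := a.isLt
            show (0:ℤ) ≤ (m:ℤ) - (a:ℕ)
            omega
      have hgmu : mu m g ≤ (n:ℤ) := by
        push_cast at hmu ⊢
        linarith
      set i : Fin m := ⟨k - 1, by omega⟩ with hi
      have hik : (i:ℕ) + 1 = k := by simp [hi]; omega
      have e1 := hrec g hgdom i
      have e2 := hrec' g hgdom i
      rw [hik, ISet_eq, finsum_mem_coe_finset] at e1 e2
      have hmemF : ε0 ∈ (Finset.univ.powersetCard k).image (fun s : Finset (Fin m) => ind s) :=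
        Finset.mem_image_of_mem _ (by rw [Finset.mem_powersetCard_univ])
      rw [← Finset.add_sum_erase _ _ hmemF] at e1 e2
      have hwg : w g = w' g := ih g hgdom hgmu
      have hrest : ∑ ε ∈ (((Finset.univ.powersetCard k).image (fun s : Finset (Fin m) => ind s)).erase ε0), w (g + ε)
          = ∑ ε ∈ (((Finset.univ.powersetCard k).image (fun s : Finset (Fin m) => ind s)).erase ε0), w' (g + ε) := by
        apply Finset.sum_congr rfl
        intro ε hε
        obtain ⟨hne, hmem'⟩ := Finset.mem_erase.mp hε
        obtain ⟨s, hs, rfl⟩ := Finset.mem_image.mp hmem'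
        rw [Finset.mem_powersetCard_univ] at hs
        by_cases hd : Dominant m (g + ind s)
        · apply ih _ hd
          have hsne : s ≠ Finset.univ.filter (fun j : Fin m => (j:ℕ) < k) := by
            rw [← hs0eq]
            intro hcon
            exact hne (by rw [hcon])
          have hlt := weight_lt hkm s hs hsne
          rw [← hs0eq] at hlt
          have hmu2 : mu m (g + ind s) = mu m g + ∑ j ∈ s, ((m:ℤ) - (j:ℕ) : ℤ) := by
            rw [mu_add, mu_ind]
          push_cast at hmu ⊢
          linarith [hmusplit]
        · rw [hw0 _ hd, hw0' _ hd]
      rw [hwg, hrest] at e1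
      have := e1.symm.trans e2
      have hcancel : w (g + ε0) = w' (g + ε0) := by
        have h := add_right_cancel this
        exact h
      rw [hfg]
      exact hcancel
  funext f
  by_cases hd : Dominant m f
  · apply key (mu m f).toNat f hd
    rw [Int.toNat_of_nonneg (mu_nonneg hd)]
  · rw [hw0 f hd, hw0' f hd]
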